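/- Let x_1, x_2 ∈ R^{1,3} be spacelike separated points, i.e. η_{ab}(x_1−x_2)^a(x_1−x_2)^b < 0. Then there exist non-parallel future-pointing unit timelike vectors t_1, t_2, each orthogonal to x_1 − x_2, such that the squared empirical distance −Π_{ab}(x_1−x_2)^a(x_1−x_2)^b between the lines γ_i(u) = u t_i + x_i equals −η_{ab}(x_1−x_2)^a(x_1−x_2)^b, where Π is the orthogonal projection onto the complement of span{t_1,t_2}. -/

import Mathlib

open scoped BigOperators

/-- The Minkowski metric η = diag(1,-1,-1,-1) on ℝ^{1,3}. -/
noncomputable def mink (a b : Fin 4) : ℝ :=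
  if a = b then (if a = (0 : Fin 4) then 1 else -1) else 0

/-- The volume 4-form ε_{abcd} (Levi-Civita symbol) on ℝ^{1,3}. -/
noncomputable def eps (a b c d : Fin 4) : ℝ :=
  ∑ σ : Equiv.Perm (Fin 4),
    if (σ 0, σ 1, σ 2, σ 3) = (a, b, c, d) then ((Equiv.Perm.sign σ : ℤ) : ℝ) else 0

/-- Lowering (equivalently, raising) an index with η. -/
noncomputable def low (p : Fin 4 → ℝ) (a : Fin 4) : ℝ := ∑ b, mink a b * p b

/-- The Minkowski inner product η_{ab} p^a q^b. -/
noncomputable def mdot (p q : Fin 4 → ℝ) : ℝ := ∑ a, ∑ b, mink a b * p a * q b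

/-- The Pauli–Lubanski vector S_a := (1/2) ε_{abcd} J^{bc} p^d (lower index). -/
noncomputable def PL (J : Fin 4 → Fin 4 → ℝ) (p : Fin 4 → ℝ) (a : Fin 4) : ℝ :=
  (1/2) * ∑ b, ∑ c, ∑ d, eps a b c d * J b c * p d

/-- The centre-of-mass vector M_a := J_{ab} p^b (lower index). -/
noncomputable def Mvec (J : Fin 4 → Fin 4 → ℝ) (p : Fin 4 → ℝ) (a : Fin 4) : ℝ :=
  ∑ c, ∑ d, mink a c * J c d * low p d

/-- ε with first index raised: ε^a{}_{bcd}. -/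
noncomputable def epsU (a b c d : Fin 4) : ℝ := ∑ e, mink a e * eps e b c d

/-- The projection Π^a_b onto the spacelike 2-plane orthogonal to p₁ and p₂:
Π^a_b = δ^a_b + (P⁴₁₂ − μ₁²μ₂²)⁻¹ (μ₂² p₁^a p₁_b + μ₁² p₂^a p₂_b − P²₁₂(p₁^a p₂_b + p₂^a p₁_b)). -/
noncomputable def Proj (p1 p2 : Fin 4 → ℝ) (a b : Fin 4) : ℝ :=
  (if a = b then (1:ℝ) else 0) +
    (1 / ((mdot p1 p2)^2 - mdot p1 p1 * mdot p2 p2)) *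
      (mdot p2 p2 * p1 a * low p1 b + mdot p1 p1 * p2 a * low p2 b
        - mdot p1 p2 * (p1 a * low p2 b + p2 a * low p1 b))


lemma mdot_expand (p q : Fin 4 → ℝ) :
    mdot p q = p 0 * q 0 - p 1 * q 1 - p 2 * q 2 - p 3 * q 3 := by
  simp [mdot, mink, Fin.sum_univ_four]; ring

lemma low_dot (p c : Fin 4 → ℝ) : ∑ b, low p b * c b = mdot p c := by
  simp [low, mink, Fin.sum_univ_four, mdot_expand]; ring

lemma proj_contract (t1 t2 c : Fin 4 → ℝ) (hc : mdot t1 c = 0) (hd : mdot t2 c = 0)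
    (e : Fin 4) : ∑ b, Proj t1 t2 e b * c b = c e := by
  have key : (∑ b, Proj t1 t2 e b * c b) =
      (∑ b, (if e = b then (1:ℝ) else 0) * c b) +
      (1 / ((mdot t1 t2)^2 - mdot t1 t1 * mdot t2 t2)) *
        (mdot t2 t2 * t1 e * (∑ b, low t1 b * c b)
          + mdot t1 t1 * t2 e * (∑ b, low t2 b * c b)
          - mdot t1 t2 * (t1 e * (∑ b, low t2 b * c b) + t2 e * (∑ b, low t1 b * c b))) := by
    simp only [Proj, Fin.sum_univ_four]; ring
  rw [key, low_dot, low_dot, hc, hd]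
  simp [Finset.sum_ite_eq, ite_mul]

set_option maxHeartbeats 800000 in
lemma main_contract (t1 t2 c : Fin 4 → ℝ) (hc : mdot t1 c = 0) (hd : mdot t2 c = 0) :
    -(∑ a, ∑ b, (∑ e, mink a e * Proj t1 t2 e b) * c a * c b) = -(mdot c c) := by
  have h0 := proj_contract t1 t2 c hc hd 0
  have h1 := proj_contract t1 t2 c hc hd 1
  have h2 := proj_contract t1 t2 c hc hd 2
  have h3 := proj_contract t1 t2 c hc hd 3
  simp only [Fin.sum_univ_four] at h0 h1 h2 h3 ⊢
  rw [mdot_expand]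
  simp only [mink, Fin.reduceEq]
  norm_num
  linear_combination (-(c 0)) * h0 + (c 1) * h1 + (c 2) * h2 + (c 3) * h3

set_option maxHeartbeats 800000 in
lemma exists_dirs (d : Fin 4 → ℝ) (hsp : mdot d d < 0) :
    ∃ t1 t2 : Fin 4 → ℝ,
      mdot t1 t1 = 1 ∧ t1 0 > 0 ∧ mdot t2 t2 = 1 ∧ t2 0 > 0 ∧
      (¬ ∃ c : ℝ, ∀ a, t2 a = c * t1 a) ∧
      mdot t1 d = 0 ∧ mdot t2 d = 0 := by
  obtain ⟨w, hw0, hww, hwd⟩ : ∃ w : Fin 4 → ℝ, w 0 = 0 ∧ mdot w w = -1 ∧ mdot w d = 0 := by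
    by_cases h12 : d 1 = 0 ∧ d 2 = 0
    · refine ⟨fun a => if a = 1 then 1 else 0, ?_, ?_, ?_⟩
      · simp only [Fin.reduceEq]; norm_num
      · rw [mdot_expand]; simp only [Fin.reduceEq]; norm_num
      · rw [mdot_expand]; simp only [Fin.reduceEq]; norm_num [h12.1]
    · have hn2 : 0 < d 1 ^ 2 + d 2 ^ 2 := by
        rcases not_and_or.1 h12 with h | h
        · have := pow_pos (abs_pos.2 h) 2
          rw [sq_abs] at this; nlinarith [sq_nonneg (d 2)]
        · have := pow_pos (abs_pos.2 h) 2
          rw [sq_abs] at this; nlinarith [sq_nonneg (d 1)]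
      have hnpos : 0 < Real.sqrt (d 1 ^ 2 + d 2 ^ 2) := Real.sqrt_pos.2 hn2
      have hnsq : Real.sqrt (d 1 ^ 2 + d 2 ^ 2) ^ 2 = d 1 ^ 2 + d 2 ^ 2 := Real.sq_sqrt hn2.le
      set n : ℝ := Real.sqrt (d 1 ^ 2 + d 2 ^ 2) with hn
      refine ⟨fun a => (if a = 1 then -(d 2) else if a = 2 then d 1 else 0) / n,
        ?_, ?_, ?_⟩
      · simp only [Fin.reduceEq]; norm_num
      · rw [mdot_expand]; simp only [Fin.reduceEq]; norm_num
        field_simp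
        linear_combination hnsq
      · rw [mdot_expand]; simp only [Fin.reduceEq]; norm_num
        field_simp
        ring
  rw [mdot_expand] at hsp
  set m : ℝ := d 0 * d 0 - d 1 * d 1 - d 2 * d 2 - d 3 * d 3 with hm
  have hA : 0 < m * (m - d 0 ^ 2) := by nlinarith [sq_nonneg (d 0)]
  have hLpos : 0 < Real.sqrt (m * (m - d 0 ^ 2)) := Real.sqrt_pos.2 hA
  have hL2 : Real.sqrt (m * (m - d 0 ^ 2)) ^ 2 = m * (m - d 0 ^ 2) := Real.sq_sqrt hA.le
  set L : ℝ := Real.sqrt (m * (m - d 0 ^ 2)) with hL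
  set t1 : Fin 4 → ℝ := fun a => (d 0 * d a - m * (if a = 0 then 1 else 0)) / L with ht1
  have ht1e : ∀ a, t1 a = (d 0 * d a - m * (if a = 0 then 1 else 0)) / L := fun a => rfl
  have ht10 : t1 0 = (d 0 * d 0 - m) / L := by rw [ht1e]; norm_num
  have ht11 : t1 1 = d 0 * d 1 / L := by rw [ht1e]; simp only [Fin.reduceEq]; norm_num
  have ht12 : t1 2 = d 0 * d 2 / L := by rw [ht1e]; simp only [Fin.reduceEq]; norm_num
  have ht13 : t1 3 = d 0 * d 3 / L := by rw [ht1e]; simp only [Fin.reduceEq]; norm_num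
  have ht10pos : 0 < t1 0 := by
    rw [ht10]; exact div_pos (by nlinarith) hLpos
  have ht1t1 : mdot t1 t1 = 1 := by
    rw [mdot_expand, ht10, ht11, ht12, ht13]
    field_simp
    linear_combination -hL2
  have ht1d : mdot t1 d = 0 := by
    rw [mdot_expand, ht10, ht11, ht12, ht13]
    field_simp
    linear_combination d 0 * hm
  have hwd' : w 1 * d 1 + w 2 * d 2 + w 3 * d 3 = 0 := by
    rw [mdot_expand, hw0] at hwd; linarith
  have ht1w : mdot t1 w = 0 := by
    rw [mdot_expand, ht10, ht11, ht12, ht13, hw0]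
    field_simp
    linear_combination (-(d 0)) * hwd'
  have hs2 : Real.sqrt 2 ^ 2 = 2 := Real.sq_sqrt (by norm_num)
  refine ⟨t1, fun a => Real.sqrt 2 * t1 a + w a, ht1t1, ht10pos, ?_, ?_, ?_, ht1d, ?_⟩
  · rw [mdot_expand]
    rw [mdot_expand] at ht1t1 ht1w hww
    linear_combination Real.sqrt 2 ^ 2 * ht1t1 + 2 * Real.sqrt 2 * ht1w + hww + hs2
  · show 0 < Real.sqrt 2 * t1 0 + w 0
    rw [hw0]
    positivity
  · rintro ⟨c, hc⟩
    have hwt : ∀ a, w a = (c - Real.sqrt 2) * t1 a := by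
      intro a
      have h' : Real.sqrt 2 * t1 a + w a = c * t1 a := hc a
      linarith
    have hq : mdot w w = (c - Real.sqrt 2) ^ 2 * mdot t1 t1 := by
      rw [mdot_expand, mdot_expand, hwt 0, hwt 1, hwt 2, hwt 3]; ring
    rw [hww, ht1t1] at hq
    nlinarith [sq_nonneg (c - Real.sqrt 2)]
  · rw [mdot_expand] at ht1d hwd ⊢
    linear_combination Real.sqrt 2 * ht1d + hwd

/-- For spacelike separated points x₁, x₂ there are non-parallel future-pointing unit
timelike directions, orthogonal to x₁ − x₂, such that the empirical distance between the
corresponding lines through x₁ and x₂ realizes the Lorentzian distance of the points. -/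
theorem stmt_15 (x1 x2 : Fin 4 → ℝ)
    (hsp : mdot (fun a => x1 a - x2 a) (fun a => x1 a - x2 a) < 0) :
    ∃ t1 t2 : Fin 4 → ℝ,
      mdot t1 t1 = 1 ∧ t1 0 > 0 ∧ mdot t2 t2 = 1 ∧ t2 0 > 0 ∧
      (¬ ∃ c : ℝ, ∀ a, t2 a = c * t1 a) ∧
      mdot t1 (fun a => x1 a - x2 a) = 0 ∧ mdot t2 (fun a => x1 a - x2 a) = 0 ∧
      -(∑ a, ∑ b, (∑ c, mink a c * Proj t1 t2 c b) *
          (x1 a - x2 a) * (x1 b - x2 b))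
        = -(mdot (fun a => x1 a - x2 a) (fun a => x1 a - x2 a)) := by
  obtain ⟨t1, t2, h1, h2, h3, h4, h5, h6, h7⟩ := exists_dirs (fun a => x1 a - x2 a) hsp
  exact ⟨t1, t2, h1, h2, h3, h4, h5, h6, h7,
    main_contract t1 t2 (fun a => x1 a - x2 a) h6 h7⟩
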